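/- Input-to-state stability of the cancellation-controlled Lorenz synchronization error. Let σ > 0, β > 0, ρ > 0 and 0 < λ < 1. Then there exist constants c > 0 and K > 0, depending only on σ, β, λ, such that the following holds. Let x₁, y₁, z₁, x₂, y₂, z₂, d₁, d₂, d₃ : ℝ → ℝ satisfy the master Lorenz system x₁′ = σ(y₁ − x₁) + d₁, y₁′ = x₁(ρ − z₁) − y₁ + d₂, z₁′ = x₁y₁ − βz₁ + d₃ and the slave system x₂′ = σ(y₂ − x₂), y₂′ = x₂(ρ − z₂) − y₂ + u₁, z₂′ = x₂y₂ − βz₂ + u₂ with u₁ = (ρ + σ − 2√((1−λ)σ) − z₂)e₁, u₂ = y₂e₁, where e₁ = x₁ − x₂, e₂ = y₁ − y₂, e₃ = z₁ − z₂, and suppose √(d₁(t)² + d₂(t)² + d₃(t)²) ≤ D for all t ≥ 0. Then, writing ‖e(t)‖ = √(e₁(t)² + e₂(t)² + e₃(t)²), for all t ≥ 0: ‖e(t)‖ ≤ ‖e(0)‖·e^{−ct} + K·D. -/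

import Mathlib

set_option maxHeartbeats 1000000

lemma lorenz_iss_core (a D : ℝ) (ha : 0 < a) (hD0 : 0 ≤ D) (V Vd : ℝ → ℝ)
    (hV : ∀ u, HasDerivAt V (Vd u) u) (hV0 : ∀ u, 0 ≤ V u)
    (hVd : ∀ u ≥ (0:ℝ), Vd u ≤ -2*a*V u + 2*Real.sqrt (V u)*D) :
    ∀ t ≥ (0:ℝ), Real.sqrt (V t) ≤ Real.sqrt (V 0) * Real.exp (-a*t) + D/a := by
  intro t ht
  have key : ∀ η : ℝ, 0 < η →
      Real.sqrt (V t) ≤ Real.sqrt (V 0 + η) * Real.exp (-a*t) + (Real.sqrt η + D/a) := by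
    intro η hη
    set h : ℝ → ℝ := fun u => Real.sqrt (V u + η) with hhdef
    have hVη : ∀ u, 0 < V u + η := fun u => by have := hV0 u; linarith
    have hhpos : ∀ u, 0 < h u := fun u => Real.sqrt_pos.2 (hVη u)
    have hhd : ∀ u, HasDerivAt h (Vd u / (2 * h u)) u :=
      fun u => ((hV u).add_const η).sqrt (ne_of_gt (hVη u))
    have hhsq : ∀ u, h u ^ 2 = V u + η := fun u => Real.sq_sqrt (hVη u).le
    have hηle : ∀ u, Real.sqrt η ≤ h u := fun u => Real.sqrt_le_sqrt (by linarith [hV0 u])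
    have hVle : ∀ u, Real.sqrt (V u) ≤ h u := fun u => Real.sqrt_le_sqrt (by linarith)
    set C := Real.sqrt η + D/a with hCdef
    have hC0 : 0 ≤ C := by positivity
    have hCa : a * C = a * Real.sqrt η + D := by rw [hCdef, mul_add, mul_div_assoc', mul_div_cancel_left₀ _ ha.ne']
    have hkey : ∀ u ≥ (0:ℝ), Vd u / (2 * h u) ≤ -a * h u + a * C := by
      intro u hu
      rw [div_le_iff₀ (mul_pos two_pos (hhpos u))]
      have h1 := hVd u hu
      have h2 : Real.sqrt (V u) * D ≤ h u * D := mul_le_mul_of_nonneg_right (hVle u) hD0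
      have h3 : a * Real.sqrt η * Real.sqrt η ≤ a * Real.sqrt η * h u := by
        apply mul_le_mul_of_nonneg_left (hηle u); positivity
      have h4 : Real.sqrt η * Real.sqrt η = η := Real.mul_self_sqrt hη.le
      have h5 := hhsq u
      nlinarith [h1, h2, h3, hhpos u]
    set F : ℝ → ℝ := fun u => C * Real.exp (a*u) - Real.exp (a*u) * h u with hFdef
    have hexp : ∀ u : ℝ, HasDerivAt (fun u : ℝ => Real.exp (a*u)) (Real.exp (a*u) * a) u := by
      intro u
      simpa using (HasDerivAt.exp ((hasDerivAt_id u).const_mul a))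
    have hFd : ∀ u, HasDerivAt F
        (C * (Real.exp (a*u) * a) -
          (Real.exp (a*u) * a * h u + Real.exp (a*u) * (Vd u / (2 * h u)))) u :=
      fun u => (((hexp u).const_mul C).sub ((hexp u).mul (hhd u)))
    have hmono : MonotoneOn F (Set.Ici (0:ℝ)) := by
      apply monotoneOn_of_deriv_nonneg (convex_Ici 0)
      · exact fun u _ => (hFd u).continuousAt.continuousWithinAt
      · intro u _; exact (hFd u).differentiableAt.differentiableWithinAt
      · intro u hu
        rw [interior_Ici] at hu
        rw [(hFd u).deriv]
        have hk := hkey u hu.le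
        have hE := (Real.exp_pos (a*u)).le
        nlinarith [mul_le_mul_of_nonneg_left hk hE]
    have hF0t : F 0 ≤ F t := hmono Set.self_mem_Ici (Set.mem_Ici.2 ht) ht
    have hexp0 : Real.exp (a*0) = 1 := by norm_num
    have h6 : Real.exp (a*t) * h t ≤ h 0 + C * Real.exp (a*t) := by
      have h7 : C * Real.exp (a*0) - Real.exp (a*0) * h 0 ≤
          C * Real.exp (a*t) - Real.exp (a*t) * h t := hF0t
      rw [hexp0] at h7
      linarith
    have h9 : Real.exp (a*t) * Real.exp (-a*t) = 1 := by
      rw [← Real.exp_add]; ring_nf; exact Real.exp_zero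
    have h7 : h t ≤ h 0 * Real.exp (-a*t) + C := by
      calc h t = (Real.exp (a*t) * h t) * Real.exp (-a*t) := by
            rw [mul_comm (Real.exp (a*t)) (h t), mul_assoc, h9, mul_one]
        _ ≤ (h 0 + C * Real.exp (a*t)) * Real.exp (-a*t) :=
            mul_le_mul_of_nonneg_right h6 (Real.exp_nonneg _)
        _ = h 0 * Real.exp (-a*t) + C * (Real.exp (a*t) * Real.exp (-a*t)) := by ring
        _ = h 0 * Real.exp (-a*t) + C := by rw [h9, mul_one]
    exact le_trans (hVle t) h7
  have hlim : Filter.Tendsto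
      (fun η : ℝ => Real.sqrt (V 0 + η) * Real.exp (-a*t) + (Real.sqrt η + D/a))
      (nhdsWithin 0 (Set.Ioi 0))
      (nhds (Real.sqrt (V 0) * Real.exp (-a*t) + D/a)) := by
    have hc : ContinuousAt
        (fun η : ℝ => Real.sqrt (V 0 + η) * Real.exp (-a*t) + (Real.sqrt η + D/a)) 0 := by
      fun_prop
    have := hc.tendsto.mono_left (nhdsWithin_le_nhds (s := Set.Ioi 0))
    simpa using this
  exact ge_of_tendsto hlim (by
    filter_upwards [self_mem_nhdsWithin] with η hη using key η hη)

/-- **Input-to-state stability of the cancellation-controlled Lorenz synchronization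
error**: there are constants `c, K > 0`, depending only on `σ`, `β`, `λ`, such that for
every `ρ > 0`, every master–slave pair of Lorenz systems with the cancellation control
`u₁ = (ρ + σ − 2√((1−λ)σ) − z₂) e₁`, `u₂ = y₂ e₁`, and every disturbance bound `D` with
`√(d₁² + d₂² + d₃²) ≤ D` on `[0,∞)`, the synchronization error satisfies
`‖e(t)‖ ≤ ‖e(0)‖ e^{−c t} + K D` for all `t ≥ 0`. -/
theorem lorenz_cancellation_iss
    (σ β lam : ℝ) (hσ : 0 < σ) (hβ : 0 < β) (hlam0 : 0 < lam) (hlam1 : lam < 1) :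
    ∃ c > (0:ℝ), ∃ K > (0:ℝ), ∀ ρ : ℝ, 0 < ρ →
      ∀ x₁ y₁ z₁ x₂ y₂ z₂ d₁ d₂ d₃ : ℝ → ℝ,
        (∀ t : ℝ, HasDerivAt x₁ (σ * (y₁ t - x₁ t) + d₁ t) t) →
        (∀ t : ℝ, HasDerivAt y₁ (x₁ t * (ρ - z₁ t) - y₁ t + d₂ t) t) →
        (∀ t : ℝ, HasDerivAt z₁ (x₁ t * y₁ t - β * z₁ t + d₃ t) t) →
        (∀ t : ℝ, HasDerivAt x₂ (σ * (y₂ t - x₂ t)) t) →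
        (∀ t : ℝ, HasDerivAt y₂ (x₂ t * (ρ - z₂ t) - y₂ t +
          (ρ + σ - 2 * Real.sqrt ((1 - lam) * σ) - z₂ t) * (x₁ t - x₂ t)) t) →
        (∀ t : ℝ, HasDerivAt z₂ (x₂ t * y₂ t - β * z₂ t + y₂ t * (x₁ t - x₂ t)) t) →
        ∀ D : ℝ,
          (∀ t ≥ (0:ℝ), Real.sqrt (d₁ t ^ 2 + d₂ t ^ 2 + d₃ t ^ 2) ≤ D) →
          ∀ t ≥ (0:ℝ),
            Real.sqrt ((x₁ t - x₂ t) ^ 2 + (y₁ t - y₂ t) ^ 2 + (z₁ t - z₂ t) ^ 2) ≤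
              Real.sqrt ((x₁ 0 - x₂ 0) ^ 2 + (y₁ 0 - y₂ 0) ^ 2 + (z₁ 0 - z₂ 0) ^ 2)
                * Real.exp (-c * t) + K * D := by
  set s := Real.sqrt ((1 - lam) * σ) with hsdef
  have hs0 : 0 ≤ s := Real.sqrt_nonneg _
  have hs2 : s ^ 2 = (1 - lam) * σ := Real.sq_sqrt (by nlinarith)
  set m := min 1 (min β σ) with hmdef
  have hm0 : 0 < m := lt_min one_pos (lt_min hβ hσ)
  have hm1 : m ≤ 1 := min_le_left _ _
  have hmβ : m ≤ β := le_trans (min_le_right _ _) (min_le_left _ _)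
  have hmσ : m ≤ σ := le_trans (min_le_right _ _) (min_le_right _ _)
  set a := lam / 2 * m with hadef
  have ha : 0 < a := by positivity
  have haβ : a ≤ β := by nlinarith
  have haσ : a < σ := by nlinarith
  have ha1 : a < 1 := by nlinarith
  have halamσ : a ≤ lam * σ / 2 := by nlinarith
  have halam : a ≤ lam / 2 := by nlinarith
  have hdisc : s ^ 2 ≤ (σ - a) * (1 - a) := by
    rw [hs2]
    nlinarith [sq_nonneg a, mul_le_mul_of_nonneg_right halam hσ.le]
  refine ⟨a, ha, 1/a, by positivity, ?_⟩
  intro ρ hρ x₁ y₁ z₁ x₂ y₂ z₂ d₁ d₂ d₃ hx₁ hy₁ hz₁ hx₂ hy₂ hz₂ D hD t ht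
  have hD0 : 0 ≤ D := le_trans (Real.sqrt_nonneg _) (hD 0 le_rfl)
  set V : ℝ → ℝ := fun u => (x₁ u - x₂ u) ^ 2 + (y₁ u - y₂ u) ^ 2 + (z₁ u - z₂ u) ^ 2
    with hVdef
  set Vd : ℝ → ℝ := fun u =>
      2 * (x₁ u - x₂ u) * (σ * ((y₁ u - y₂ u) - (x₁ u - x₂ u)) + d₁ u)
    + 2 * (y₁ u - y₂ u) *
        (-(σ - 2*s) * (x₁ u - x₂ u) - (y₁ u - y₂ u) - x₁ u * (z₁ u - z₂ u) + d₂ u)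
    + 2 * (z₁ u - z₂ u) * (x₁ u * (y₁ u - y₂ u) - β * (z₁ u - z₂ u) + d₃ u)
    with hVddef
  have hV0 : ∀ u, 0 ≤ V u := fun u => by positivity
  have hV : ∀ u, HasDerivAt V (Vd u) u := by
    intro u
    have he₁ := (hx₁ u).sub (hx₂ u)
    have he₂ := (hy₁ u).sub (hy₂ u)
    have he₃ := (hz₁ u).sub (hz₂ u)
    have h : HasDerivAt V _ u := ((he₁.pow 2).add (he₂.pow 2)).add (he₃.pow 2)
    convert h using 1
    simp only [Pi.sub_apply]
    push_cast
    ring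
  have hVd : ∀ u ≥ (0:ℝ), Vd u ≤ -2*a*V u + 2*Real.sqrt (V u)*D := by
    intro u hu
    have hdsq : Real.sqrt (d₁ u ^ 2 + d₂ u ^ 2 + d₃ u ^ 2) ≤ D := hD u hu
    have hdot : (x₁ u - x₂ u) * d₁ u + (y₁ u - y₂ u) * d₂ u + (z₁ u - z₂ u) * d₃ u ≤
        Real.sqrt (V u) * D := by
      set E1 := x₁ u - x₂ u; set E2 := y₁ u - y₂ u; set E3 := z₁ u - z₂ u
      have hcs : (E1 * d₁ u + E2 * d₂ u + E3 * d₃ u) ^ 2 ≤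
          (E1^2 + E2^2 + E3^2) * (d₁ u ^ 2 + d₂ u ^ 2 + d₃ u ^ 2) := by
        nlinarith [sq_nonneg (E1 * d₂ u - E2 * d₁ u), sq_nonneg (E1 * d₃ u - E3 * d₁ u),
          sq_nonneg (E2 * d₃ u - E3 * d₂ u)]
      calc E1 * d₁ u + E2 * d₂ u + E3 * d₃ u
          ≤ |E1 * d₁ u + E2 * d₂ u + E3 * d₃ u| := le_abs_self _
        _ = Real.sqrt ((E1 * d₁ u + E2 * d₂ u + E3 * d₃ u) ^ 2) :=
            (Real.sqrt_sq_eq_abs _).symm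
        _ ≤ Real.sqrt ((E1^2 + E2^2 + E3^2) * (d₁ u ^ 2 + d₂ u ^ 2 + d₃ u ^ 2)) :=
            Real.sqrt_le_sqrt hcs
        _ = Real.sqrt (V u) * Real.sqrt (d₁ u ^ 2 + d₂ u ^ 2 + d₃ u ^ 2) :=
            Real.sqrt_mul (hV0 u) _
        _ ≤ Real.sqrt (V u) * D :=
            mul_le_mul_of_nonneg_left hdsq (Real.sqrt_nonneg _)
    have hquad : -2*σ*(x₁ u - x₂ u)^2 - 2*(y₁ u - y₂ u)^2 - 2*β*(z₁ u - z₂ u)^2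
        + 4*s*((x₁ u - x₂ u)*(y₁ u - y₂ u)) ≤
        -2*a*((x₁ u - x₂ u)^2 + (y₁ u - y₂ u)^2 + (z₁ u - z₂ u)^2) := by
      have hE3 : (a - β) * (z₁ u - z₂ u)^2 ≤ 0 :=
        mul_nonpos_of_nonpos_of_nonneg (by linarith) (sq_nonneg _)
      nlinarith [hdisc, sq_nonneg ((σ - a) * (x₁ u - x₂ u) - s * (y₁ u - y₂ u)),
        mul_nonneg (sub_nonneg.2 hdisc) (sq_nonneg (y₁ u - y₂ u)), haσ, ha1, hE3,
        sq_nonneg (y₁ u - y₂ u)]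
    have hexpand : Vd u = -2*σ*(x₁ u - x₂ u)^2 - 2*(y₁ u - y₂ u)^2 - 2*β*(z₁ u - z₂ u)^2
        + 4*s*((x₁ u - x₂ u)*(y₁ u - y₂ u))
        + 2*((x₁ u - x₂ u) * d₁ u + (y₁ u - y₂ u) * d₂ u + (z₁ u - z₂ u) * d₃ u) := by
      simp only [hVddef]; ring
    have hVu : V u = (x₁ u - x₂ u)^2 + (y₁ u - y₂ u)^2 + (z₁ u - z₂ u)^2 := by
      simp only [hVdef]
    rw [hexpand, hVu]
    linarith
  have hcore := lorenz_iss_core a D ha hD0 V Vd hV hV0 hVd t ht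
  have : (1:ℝ)/a * D = D / a := by ring
  rw [this]
  exact hcore
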